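/- Let (λ, μ) be a codimension-3 decoration with k = ∑μⱼ and suppose λ₄ exists and satisfies λᵢ + μ₁ = k+1 for i = 1, 2 (two largest parts pair perfectly with μ₁). Then the minimal tight double link of (λ, μ) is the pair ((λ₃, λ₄, …, λ_b), (λ₃+p, μ₂, …, μ_t)) reordered, it has exactly b-2 nonzero parts in its first partition, and for every index i with 3 ≤ i ≤ r, where λ_i + μ₁ = k+1, the corresponding parts l = λ_i of the new pair satisfy l + m₁ = κ' + 1 with m₁ the largest part of the new second partition and κ' the new level. -/

import Mathlib

/-- Sort a list of integers in non-increasing order. -/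
def rsort (l : List ℤ) : List ℤ := List.insertionSort (· ≥ ·) l

/-- Remove all non-positive parts (trailing zeros) from a partition. -/
def strip (l : List ℤ) : List ℤ := l.filter (fun x => 0 < x)

/-- The smallest minimal link of a codimension-`c` pair of partitions `(λ, μ)`:
choose the `c` largest parts of `λ` (padding with zeros if needed), shift them by
`p = (c-2)k + 1 - (λ₁ + ⋯ + λ_c)` where `k = ∑ μⱼ`, merge with `μ` and re-sort;
the other partition becomes `(λ_{c+1}, …, λ_b)`. -/
def smlink (c : ℕ) (P : List ℤ × List ℤ) : List ℤ × List ℤ :=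
  let p : ℤ := ((c : ℤ) - 2) * P.2.sum + 1 - (P.1.take c).sum
  (strip (rsort ((P.1.take c ++ List.replicate (c - P.1.length) 0).map (· + p) ++ P.2)),
   strip (P.1.drop c))

/-- The smallest minimal link of `P` produces nonnegative parts, i.e. `λ_c + p ≥ 0`. -/
def ValidLink (c : ℕ) (P : List ℤ × List ℤ) : Prop :=
  0 ≤ P.1.getD (c - 1) 0 + (((c : ℤ) - 2) * P.2.sum + 1 - (P.1.take c).sum)

/-- A partition: a non-increasing list of positive integers. -/
def IsPartition (l : List ℤ) : Prop := l.Pairwise (· ≥ ·) ∧ ∀ x ∈ l, 0 < x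

/-- A codimension-`c` decoration: a pair of partitions reachable to the complete
intersection pair `((1^c), (1))` by finitely many smallest minimal links, all of
whose intermediate links are valid (have nonnegative parts). -/
def IsDecoration (c : ℕ) (P : List ℤ × List ℤ) : Prop :=
  IsPartition P.1 ∧ IsPartition P.2 ∧
  ∃ n : ℕ, (∀ m < n, ValidLink c ((smlink c)^[m] P)) ∧
    (smlink c)^[n] P = (List.replicate c 1, [1])

/-- The link of a codimension-`c` pair `(λ, μ)` at a chosen sublist `λ'` of `c`
parts of `λ` (zeros allowed): with shift `p = (c-2)∑μ + 1 - ∑λ'ᵢ`, the new pair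
is `(rsort(λ'₁+p, …, λ'_c+p, μ₁, …, μ_t), λ \ λ')`. -/
def linkAt (c : ℕ) (lam' : List ℤ) (P : List ℤ × List ℤ) : List ℤ × List ℤ :=
  let p : ℤ := ((c : ℤ) - 2) * P.2.sum + 1 - lam'.sum
  (strip (rsort (lam'.map (· + p) ++ P.2)), strip (P.1.diff lam'))

/-- The minimal tight double link of a codimension-`c` pair `(λ, μ)`: first the
smallest minimal link (shift `p`), then the link at the sublist
`(λ₁+p, …, λ_{c-1}+p, μ₁)`, whose shift is `q = λ_c - μ₁`. -/
def tightDouble (c : ℕ) (P : List ℤ × List ℤ) : List ℤ × List ℤ :=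
  linkAt c
    ((P.1.take (c - 1)).map
        (· + (((c : ℤ) - 2) * P.2.sum + 1 - (P.1.take c).sum)) ++ [P.2.getD 0 0])
    (smlink c P)


lemma rsort_perm (l : List ℤ) : (rsort l).Perm l := List.perm_insertionSort _ l
lemma rsort_sorted (l : List ℤ) : (rsort l).Pairwise (· ≥ ·) := List.pairwise_insertionSort _ l
lemma rsort_eq (l m : List ℤ) (hp : l.Perm m) (hm : m.Pairwise (· ≥ ·)) : rsort l = m :=
  ((rsort_perm l).trans hp).eq_of_pairwise' (rsort_sorted l) hm
lemma strip_sorted (l : List ℤ) (h : l.Pairwise (· ≥ ·)) : (strip l).Pairwise (· ≥ ·) := h.filter _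
lemma strip_nil : strip [] = [] := rfl
lemma strip_pos {l : List ℤ} {x : ℤ} (h : x ∈ strip l) : 0 < x := by
  have := List.of_mem_filter h; simpa using this
lemma strip_sum {l : List ℤ} (h : ∀ x ∈ l, 0 ≤ x) : (strip l).sum = l.sum := by
  induction l with
  | nil => rfl
  | cons x t ih =>
    have ht := ih (fun y hy => h y (by simp [hy]))
    by_cases hx : 0 < x
    · simp [strip, List.filter_cons, hx] at *; omega
    · have hx0 : x = 0 := le_antisymm (not_lt.1 hx) (h x (by simp))
      simp [strip, List.filter_cons, hx, hx0] at *; omega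
lemma strip_eq_self {l : List ℤ} (h : ∀ x ∈ l, 0 < x) : strip l = l :=
  List.filter_eq_self.2 (fun x hx => by simpa using h x hx)
lemma rsort_sum (l : List ℤ) : (rsort l).sum = l.sum := (rsort_perm l).sum_eq
lemma strip_rsort_sum {l : List ℤ} (h : ∀ x ∈ l, 0 ≤ x) : (strip (rsort l)).sum = l.sum := by
  rw [strip_sum (fun x hx => h x ((rsort_perm l).subset hx)), rsort_sum]
lemma sum_nonneg' {l : List ℤ} (h : ∀ x ∈ l, 0 < x) : 0 ≤ l.sum :=
  List.sum_nonneg (fun x hx => le_of_lt (h x hx))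

lemma pair_le_sublist : ∀ {l : List ℤ}, l.Pairwise (· ≥ ·) → ∀ {x y : ℤ},
    List.Sublist [x, y] l → x + y ≤ l.getD 0 0 + l.getD 1 0 := by
  intro l
  induction l with
  | nil => intro _ x y h; simp at h
  | cons u t ih =>
    intro hs x y h
    cases h with
    | cons _ h' =>
      rcases t with _ | ⟨v, _ | ⟨w, t'⟩⟩
      · simp at h'
      · have := h'.length_le; simp at this
      · have ihv := ih hs.of_cons h'
        simp only [List.pairwise_cons] at hs
        have h1 : v ≤ u := hs.1 v (by simp)
        have h2 : w ≤ v := hs.2.1 w (by simp)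
        simp only [List.getD_cons_zero, List.getD_cons_succ] at *
        linarith
    | cons_cons _ h' =>
      have hy : y ∈ t := (List.singleton_sublist).1 h'
      rcases t with _ | ⟨v, t'⟩
      · simp at hy
      · simp only [List.pairwise_cons] at hs
        have h1 : y ≤ v := by
          rcases List.mem_cons.1 hy with rfl | hy'
          · exact le_refl _
          · exact hs.2.1 y hy'
        simp only [List.getD_cons_zero, List.getD_cons_succ]
        linarith

lemma pair_le_subperm {l : List ℤ} (hs : l.Pairwise (· ≥ ·)) {x y : ℤ}
    (h : List.Subperm [x, y] l) : x + y ≤ l.getD 0 0 + l.getD 1 0 := by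
  obtain ⟨l', hp, hsub⟩ := h
  have hlen : l'.length = 2 := by simpa using hp.length_eq
  have hsum : l'.sum = x + y := by simpa using hp.sum_eq
  rcases l' with _ | ⟨c, _ | ⟨d, _ | ⟨e, t⟩⟩⟩ <;> simp at hlen
  have : c + d ≤ l.getD 0 0 + l.getD 1 0 := pair_le_sublist hs hsub
  simp at hsum; omega

lemma valid_pair_bound {l : List ℤ} (hs : l.Pairwise (· ≥ ·)) {x y S : ℤ}
    (h : List.Subperm [x, y] l)
    (hv : 0 ≤ l.getD 2 0 + (S + 1 - (l.take 3).sum)) : x + y ≤ S + 1 := by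
  have hp := pair_le_subperm hs h
  have hlen : 2 ≤ l.length := by simpa using h.length_le
  rcases l with _ | ⟨u, _ | ⟨v, _ | ⟨w, t⟩⟩⟩ <;> simp at hlen
  · simp only [List.take, List.sum_cons, List.sum_nil, List.getD_cons_zero,
      List.getD_cons_succ] at hv hp ⊢
    simp at hv hp; omega
  · simp only [List.take, List.sum_cons, List.getD_cons_zero,
      List.getD_cons_succ] at hv hp ⊢
    simp at hv hp; omega

lemma suminv : ∀ (n : ℕ) (Q : List ℤ × List ℤ), Q.1.Pairwise (· ≥ ·) →
    (∀ x ∈ Q.1, 0 < x) → (∀ x ∈ Q.2, 0 < x) →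
    (∀ m < n, ValidLink 3 ((smlink 3)^[m] Q)) →
    (smlink 3)^[n] Q = (List.replicate 3 1, [1]) →
    Q.1.sum = 2 * Q.2.sum + 1 := by
  intro n
  induction n with
  | zero =>
    intro Q _ _ _ _ hbase
    simp only [Function.iterate_zero_apply] at hbase
    rw [hbase]; decide
  | succ n ih =>
    rintro ⟨lam, mu⟩ hs hp1 hp2 chain hbase
    have hv := chain 0 (Nat.succ_pos n)
    simp only [Function.iterate_zero_apply, ValidLink] at hv
    norm_num at hv
    have key : (smlink 3 (lam, mu)).1.sum = 2 * (smlink 3 (lam, mu)).2.sum + 1 := by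
      refine ih _ (strip_sorted _ (rsort_sorted _)) (fun x hx => strip_pos hx)
        (fun x hx => strip_pos hx) ?_ ?_
      · intro m hm
        have := chain (m+1) (by omega)
        simpa [Function.iterate_succ_apply] using this
      · rw [← Function.iterate_succ_apply]; exact hbase
    have hmu : 0 ≤ mu.sum := sum_nonneg' hp2
    simp only [smlink] at key
    norm_num at key
    rcases lam with _ | ⟨x, _ | ⟨y, _ | ⟨z, t⟩⟩⟩ <;>
      simp only [List.take_nil, List.take_cons, List.take_zero, List.drop_nil,
        List.length_nil, List.length_cons, List.drop_succ_cons, List.drop_zero,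
        List.map_nil, List.map_cons, List.map_append, List.nil_append, strip_nil,
        List.cons_append, List.sum_nil, List.sum_cons] at key hv ⊢
    · rw [strip_rsort_sum ?_] at key
      · simp only [List.sum_append, List.sum_cons, List.sum_nil] at key
        simp [List.map_replicate, List.sum_replicate] at key
        simp at hv ⊢
        omega
      · intro w hw
        simp [List.map_replicate] at hw
        rcases hw with h1 | h2
        · simp at hv; omega
        · exact le_of_lt (hp2 w h2)
    · -- lam = [x]
      rw [strip_rsort_sum ?_] at key
      · simp only [List.sum_append, List.sum_cons, List.sum_nil] at key
        simp [List.map_replicate, List.sum_replicate, show (3:ℕ)-1 = 2 from rfl] at key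
        simp at hv hp1 ⊢
        omega
      · intro w hw
        simp [List.map_replicate, show (3:ℕ)-1 = 2 from rfl] at hw
        simp at hv hp1
        rcases hw with h1 | h1 | h2 <;> [omega; omega; exact le_of_lt (hp2 w h2)]
    · -- lam = [x,y]
      rw [strip_rsort_sum ?_] at key
      · simp [List.map_replicate, List.sum_replicate, show (3:ℕ)-2 = 1 from rfl] at key
        simp at hv hp1 ⊢
        omega
      · intro w hw
        simp [List.map_replicate, show (3:ℕ)-2 = 1 from rfl] at hw
        simp at hv hp1
        rcases hw with h1 | h1 | h1 | h2 <;> try omega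
        exact le_of_lt (hp2 w h2)
    · -- lam = x::y::z::t
      have hlen : (3:ℕ) - (t.length + 1 + 1 + 1) = 0 := by omega
      rw [hlen] at key
      simp only [List.replicate_zero, List.append_nil, List.map_cons, List.map_nil,
        List.cons_append, List.nil_append, List.take_succ_cons, List.take_zero,
        List.take_cons, List.sum_cons, List.sum_nil] at key
      simp only [List.pairwise_cons] at hs
      simp at hv hp1
      rw [strip_rsort_sum ?_] at key
      · rw [strip_sum (fun w hw => le_of_lt (hp1.2.2.2 w hw))] at key
        simp at key ⊢
        omega
      · intro w hw
        simp at hw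
        have hxz : z ≤ x := hs.1 z (by simp)
        have hyz : z ≤ y := hs.2.1 z (by simp)
        rcases hw with h1 | h1 | h1 | h2 <;> try omega
        exact le_of_lt (hp2 w h2)

/-- Lemma Grinduction: let `(λ, μ)` be a codimension-3 decoration with
`k = ∑μⱼ`, at least four parts in `λ`, and suppose `λᵢ + μ₁ = k+1` for all
`1 ≤ i ≤ r` where `r ≥ 2`. Then the minimal tight double link of `(λ, μ)` is the
pair `((λ₃, …, λ_b), (λ₃+p, μ₂, …, μ_t))` (reordered), its first partition has
exactly `b-2` nonzero parts, and for each `3 ≤ i ≤ r` the part `l = λᵢ` of the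
new pair satisfies `l + m₁ = κ' + 1`, where `m₁` is the largest part of the new
second partition and `κ'` is the new level. -/
theorem stmt19 (P : List ℤ × List ℤ) (k : ℤ) (hk : P.2.sum = k)
    (h : IsDecoration 3 P) (hb : 4 ≤ P.1.length)
    (r : ℕ) (hr : 2 ≤ r)
    (hG : ∀ i : ℕ, 1 ≤ i → i ≤ r → P.1.getD (i - 1) 0 + P.2.getD 0 0 = k + 1) :
    (tightDouble 3 P).1 = P.1.drop 2 ∧
    (tightDouble 3 P).1.length = P.1.length - 2 ∧
    (∀ i : ℕ, 3 ≤ i → i ≤ r →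
      (tightDouble 3 P).1.getD (i - 3) 0 + (tightDouble 3 P).2.getD 0 0
        = (tightDouble 3 P).2.sum + 1) := by
  obtain ⟨⟨sl, pl⟩, ⟨sm, pm⟩, n, chain, hbase⟩ := h
  obtain ⟨lam, mu⟩ := P
  simp only at sl pl sm pm hk hb hG ⊢
  rcases lam with _ | ⟨l1, _ | ⟨l2, _ | ⟨l3, _ | ⟨l4, rest⟩⟩⟩⟩ <;>
    simp only [List.length_nil, List.length_cons] at hb <;> try omega
  have hsum : (l1::l2::l3::l4::rest : List ℤ).sum = 2 * mu.sum + 1 :=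
    suminv n (_, mu) sl pl pm chain hbase
  have hl1p : 0 < l1 := pl _ (by simp)
  have hl2p : 0 < l2 := pl _ (by simp)
  have hl3p : 0 < l3 := pl _ (by simp)
  have hl4p : 0 < l4 := pl _ (by simp)
  have hrestp : ∀ x ∈ rest, 0 < x := fun x hx => pl _ (by simp [hx])
  have hrests : 0 ≤ rest.sum := sum_nonneg' hrestp
  simp only [List.sum_cons] at hsum
  rcases mu with _ | ⟨m1, mt⟩
  · exfalso
    have h1 := hG 1 (le_refl 1) (by omega)
    simp at h1 hk hsum
    omega
  simp only [List.sum_cons] at hsum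
  have hmtp : ∀ x ∈ mt, 0 < x := fun x hx => pm _ (by simp [hx])
  have hm1p : 0 < m1 := pm _ (by simp)
  simp only [List.sum_cons] at hk
  have hG1 : l1 + m1 = k + 1 := by have := hG 1 (le_refl 1) (by omega); simpa using this
  have hG2 : l2 + m1 = k + 1 := by
    have := hG 2 (by norm_num) hr
    simpa using this
  have hA : smlink 3 (l1::l2::l3::l4::rest, m1::mt)
      = (strip (rsort ((l1 + (k+1-(l1+l2+l3))) :: (l2 + (k+1-(l1+l2+l3)))
          :: (l3 + (k+1-(l1+l2+l3))) :: m1 :: mt)), l4::rest) := by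
    simp only [smlink]
    norm_num
    rw [hk, show l1 + (l2 + l3) = l1 + l2 + l3 by ring]
    exact ⟨rfl, strip_eq_self (by
      intro x hx
      rcases List.mem_cons.1 hx with rfl | hx
      exacts [hl4p, hrestp x hx])⟩
  simp only [List.pairwise_cons] at sl
  have key0 : strip (rsort ((0:ℤ)::0::l3::l4::rest)) = l3::l4::rest := by
    rw [rsort_eq _ ((l3::l4::rest) ++ [0,0]) ?_ ?_]
    · simp only [strip, List.filter_append]
      rw [List.filter_eq_self.2 (by
        intro x hx
        rcases List.mem_cons.1 hx with rfl | hx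
        · simpa using hl3p
        rcases List.mem_cons.1 hx with rfl | hx
        · simpa using hl4p
        · simpa using hrestp x hx)]
      norm_num
    · exact List.perm_append_comm (l₁ := [0,0]) (l₂ := l3::l4::rest)
    · rw [List.pairwise_append]
      refine ⟨?_, by norm_num, ?_⟩
      · simp only [List.pairwise_cons] at *
        exact ⟨sl.2.2.1, sl.2.2.2.1, sl.2.2.2.2⟩
      · intro x hx y hy
        have : y = 0 := by simp at hy; tauto
        subst this
        rcases List.mem_cons.1 hx with rfl | hx
        · omega
        rcases List.mem_cons.1 hx with rfl | hx
        · omega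
        · have := hrestp x hx; omega
  have trick : ∀ u v w : ℤ, u = 0 → v = 0 → w = l3 →
      strip (rsort (u::v::w::l4::rest)) = l3::l4::rest := by
    rintro u v w rfl rfl rfl; exact key0
  have hg1 : (tightDouble 3 (l1::l2::l3::l4::rest, m1::mt)).1 = l3::l4::rest := by
    simp only [tightDouble, hA, linkAt]
    norm_num
    exact trick _ _ _ (by omega) (by omega) (by omega)
  refine ⟨hg1, by rw [hg1]; simp, ?_⟩
  intro i hi3 hir
  obtain ⟨j, rfl⟩ : ∃ j, i = j + 3 := ⟨i - 3, by omega⟩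
  have hl3 : l3 + m1 = k + 1 := by
    have := hG 3 (by norm_num) (by omega)
    simpa using this
  have hGi : (l3::l4::rest).getD j 0 + m1 = k + 1 := by
    have := hG (j+3) (by omega) hir
    simpa using this
  have hvA : ValidLink 3 (strip (rsort ((l1 + (k+1-(l1+l2+l3))) :: (l2 + (k+1-(l1+l2+l3)))
      :: (l3 + (k+1-(l1+l2+l3))) :: m1 :: mt)), l4::rest) := by
    rw [← hA]
    rcases n with _ | _ | n
    · exfalso
      simp only [Function.iterate_zero_apply] at hbase
      have := congrArg (fun q => q.1.length) hbase
      simp at this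
    · have h1 : (smlink 3)^[1] (l1::l2::l3::l4::rest, m1::mt)
          = (List.replicate 3 1, [1]) := hbase
      simp only [Function.iterate_one] at h1
      rw [h1]
      simp [ValidLink]
    · have := chain 1 (by omega)
      simpa using this
  have hv' : 0 ≤ (strip (rsort ((l1 + (k+1-(l1+l2+l3))) :: (l2 + (k+1-(l1+l2+l3)))
        :: (l3 + (k+1-(l1+l2+l3))) :: m1 :: mt))).getD 2 0 + ((l4::rest).sum + 1
        - ((strip (rsort ((l1 + (k+1-(l1+l2+l3))) :: (l2 + (k+1-(l1+l2+l3)))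
        :: (l3 + (k+1-(l1+l2+l3))) :: m1 :: mt))).take 3).sum) := by
    simp only [ValidLink] at hvA
    norm_num at hvA ⊢
    omega
  have hmta : ∀ x ∈ mt, x ≤ m1 - l3 := by
    rcases mt with _ | ⟨m2, mt'⟩
    · simp
    · simp only [List.sum_cons] at hsum hk
      have hm2 : m2 ≤ m1 - l3 := by
        by_contra hcon
        push_neg at hcon
        have hsub0 : List.Sublist [m1, m2] ((l1 + (k+1-(l1+l2+l3))) :: (l2 + (k+1-(l1+l2+l3)))
            :: (l3 + (k+1-(l1+l2+l3))) :: m1 :: m2 :: mt') :=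
          ((((List.nil_sublist mt').cons₂ m2).cons₂ m1).cons _ |>.cons _) |>.cons _
        have hsubf := hsub0.filter (fun x => decide (0 < x))
        rw [show List.filter (fun x => decide (0 < x)) [m1, m2] = strip [m1, m2] from rfl,
          strip_eq_self (by
            intro x hx
            rcases List.mem_cons.1 hx with rfl | hx
            · exact hm1p
            · simp at hx; subst hx; exact hmtp _ (by simp))] at hsubf
        have hperm := ((rsort_perm ((l1 + (k+1-(l1+l2+l3))) :: (l2 + (k+1-(l1+l2+l3)))
            :: (l3 + (k+1-(l1+l2+l3))) :: m1 :: m2 :: mt')).symm).filter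
            (fun x => decide (0 < x))
        have hsp : List.Subperm [m1, m2] (strip (rsort ((l1 + (k+1-(l1+l2+l3)))
            :: (l2 + (k+1-(l1+l2+l3))) :: (l3 + (k+1-(l1+l2+l3))) :: m1 :: m2 :: mt'))) :=
          hsubf.subperm.trans hperm.subperm
        have hb2 := valid_pair_bound (strip_sorted _ (rsort_sorted _)) hsp hv'
        simp only [List.sum_cons] at hb2
        omega
      intro x hx
      rcases List.mem_cons.1 hx with rfl | hx
      · exact hm2
      · simp only [List.pairwise_cons] at sm
        have := sm.2.1 x hx
        omega
  have hapos : 0 < m1 - l3 := by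
    by_contra hneg
    push_neg at hneg
    have hmtnil : mt = [] := by
      rcases mt with _ | ⟨m2, mt'⟩
      · rfl
      · exfalso
        have h1 := hmta m2 (by simp)
        have h2 := hmtp m2 (by simp)
        omega
    subst hmtnil
    simp at hk hsum
    omega
  have hA1 : strip (rsort ((l1 + (k+1-(l1+l2+l3))) :: (l2 + (k+1-(l1+l2+l3)))
      :: (l3 + (k+1-(l1+l2+l3))) :: m1 :: mt))
      = m1 :: (m1-l3) :: (m1-l3) :: (m1-l3) :: mt := by
    rw [show (l1 + (k+1-(l1+l2+l3))) = m1 - l3 by omega,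
        show (l2 + (k+1-(l1+l2+l3))) = m1 - l3 by omega,
        show (l3 + (k+1-(l1+l2+l3))) = m1 - l3 by omega]
    rw [rsort_eq _ (m1 :: (m1-l3) :: (m1-l3) :: (m1-l3) :: mt) ?_ ?_]
    · refine strip_eq_self ?_
      intro x hx
      rcases List.mem_cons.1 hx with rfl | hx
      · exact hm1p
      rcases List.mem_cons.1 hx with rfl | hx
      · exact hapos
      rcases List.mem_cons.1 hx with rfl | hx
      · exact hapos
      rcases List.mem_cons.1 hx with rfl | hx
      · exact hapos
      · exact hmtp x hx
    · exact List.perm_middle (a := m1) (l₁ := [m1-l3, m1-l3, m1-l3]) (l₂ := mt)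
    · simp only [List.pairwise_cons] at sm ⊢
      refine ⟨?_, ?_, ?_, ?_, sm.2⟩
      · intro b hb
        rcases List.mem_cons.1 hb with rfl | hb
        · omega
        rcases List.mem_cons.1 hb with rfl | hb
        · omega
        rcases List.mem_cons.1 hb with rfl | hb
        · omega
        · have := hmta b hb; omega
      · intro b hb
        rcases List.mem_cons.1 hb with rfl | hb
        · omega
        rcases List.mem_cons.1 hb with rfl | hb
        · omega
        · have := hmta b hb; omega
      · intro b hb
        rcases List.mem_cons.1 hb with rfl | hb
        · omega
        · have := hmta b hb; omega
      · exact fun b hb => hmta b hb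
  have hdiff : (((m1 :: (m1-l3) :: (m1-l3) :: (m1-l3) :: mt).erase (m1-l3)).erase
      (m1-l3)).erase m1 = (m1-l3) :: mt := by
    have hne : (m1 == (m1-l3)) = false := by simp; omega
    simp [List.erase_cons, hne]
  have trick2 : ∀ u v : ℤ, u = m1 - l3 → v = m1 - l3 →
      strip ((((strip (rsort ((l1 + (k+1-(l1+l2+l3))) :: (l2 + (k+1-(l1+l2+l3)))
        :: (l3 + (k+1-(l1+l2+l3))) :: m1 :: mt))).erase u).erase v).erase m1)
        = (m1-l3) :: mt := by
    rintro u v rfl rfl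
    rw [hA1, hdiff]
    refine strip_eq_self ?_
    intro x hx
    rcases List.mem_cons.1 hx with rfl | hx
    · exact hapos
    · exact hmtp x hx
  have hg3 : (tightDouble 3 (l1::l2::l3::l4::rest, m1::mt)).2 = (m1-l3) :: mt := by
    simp only [tightDouble, hA, linkAt]
    norm_num
    exact trick2 _ _ (by omega) (by omega)
  rw [hg1, hg3]
  simp only [Nat.add_sub_cancel, List.getD_cons_zero, List.sum_cons]
  omega
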